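/- Let P = (P* ⊣ P_*) be an adjunction with P*: 𝒞 → 𝒟 and P_*: 𝒟 → 𝒞, with unit η_P: id_𝒞 → P_*P*. If 𝒞 is idempotent complete and the unit η_P is a split monomorphism of functors, i.e. there exists a natural transformation ζ: P_*P* → id_𝒞 with ζ ∘ η_P = id, then the comparison functor Γ_P: 𝒞 → 𝒟_{𝕋(P)} to the category of comodules over the induced comonad 𝕋(P) is an equivalence of categories. -/

import Mathlib

open CategoryTheory

/-- If the domain of the left adjoint is idempotent complete and the unit of the adjunction
`P* ⊣ P_*` is a split monomorphism of functors, then the comparison functor to the category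
of comodules (coalgebras) over the induced comonad is an equivalence. -/
theorem comparison_isEquivalence_of_unit_split_mono
    {C D : Type*} [Category C] [Category D]
    (L : C ⥤ D) (R : D ⥤ C) (adj : L ⊣ R)
    (hidem : IsIdempotentComplete C)
    (hsplit : ∃ ζ : L ⋙ R ⟶ 𝟭 C, adj.unit ≫ ζ = 𝟙 (𝟭 C)) :
    (Comonad.comparison adj).IsEquivalence := by
  obtain ⟨ζ, hζ⟩ := hsplit
  have hζ' : ∀ X : C, adj.unit.app X ≫ ζ.app X = 𝟙 X := fun X => by
    simpa using congrArg (fun t => t.app X) hζ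
  -- L is faithful
  have hLf : L.Faithful := by
    constructor
    intro X Y f g h
    have hf := ζ.naturality f
    have hg := ζ.naturality g
    simp only [Functor.comp_map, Functor.id_map] at hf hg
    calc f = (adj.unit.app X ≫ ζ.app X) ≫ f := by rw [hζ']; simp
    _ = adj.unit.app X ≫ R.map (L.map f) ≫ ζ.app Y := by rw [Category.assoc, hf]
    _ = adj.unit.app X ≫ R.map (L.map g) ≫ ζ.app Y := by rw [h]
    _ = (adj.unit.app X ≫ ζ.app X) ≫ g := by rw [Category.assoc, hg]
    _ = g := by rw [hζ']; simp
  have : (Comonad.comparison adj).Faithful := Comonad.comparison_faithful_of_faithful adj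
  -- fullness
  have : (Comonad.comparison adj).Full := by
    constructor
    intro X Y f
    refine ⟨adj.unit.app X ≫ R.map f.f ≫ ζ.app Y, ?_⟩
    ext
    have hfh := f.h
    simp only [Comonad.comparison_obj_a, Adjunction.toComonad_coe, Functor.comp_map] at hfh
    show L.map (adj.unit.app X ≫ R.map f.f ≫ ζ.app Y) = f.f
    have key : ∀ g : L.obj X ⟶ L.obj Y,
        L.map (adj.unit.app X) ≫ L.map (R.map g) = g ≫ L.map (adj.unit.app Y) →
        L.map (adj.unit.app X ≫ R.map g ≫ ζ.app Y) = g := by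
      intro g hfh
      calc L.map (adj.unit.app X ≫ R.map g ≫ ζ.app Y)
          = (L.map (adj.unit.app X) ≫ L.map (R.map g)) ≫ L.map (ζ.app Y) := by
            simp [Functor.map_comp]
      _ = g ≫ L.map (adj.unit.app Y) ≫ L.map (ζ.app Y) := by rw [hfh, Category.assoc]
      _ = g ≫ L.map (adj.unit.app Y ≫ ζ.app Y) := by rw [Functor.map_comp]
      _ = g := by rw [hζ', L.map_id]; simp
    exact key f.f hfh
  -- essential surjectivity
  have : (Comonad.comparison adj).EssSurj := by
    have key : ∀ (AA : D) (a : AA ⟶ L.obj (R.obj AA)),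
        a ≫ L.map (R.map a) = a ≫ L.map (adj.unit.app (R.obj AA)) →
        a ≫ adj.counit.app AA = 𝟙 AA →
        ∃ (Y : C) (hom : L.obj Y ⟶ AA) (inv : AA ⟶ L.obj Y), hom ≫ inv = 𝟙 _ ∧ inv ≫ hom = 𝟙 _ ∧
          L.map (adj.unit.app Y) ≫ L.map (R.map hom) = hom ≫ a := by
      intro AA a hcoassoc hAcounit
      set Ra : R.obj AA ⟶ R.obj (L.obj (R.obj AA)) := R.map a with hRa
      set η : R.obj AA ⟶ R.obj (L.obj (R.obj AA)) := adj.unit.app (R.obj AA) with hη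
      set e : R.obj AA ⟶ R.obj AA := Ra ≫ ζ.app (R.obj AA) with he_def
      have hRcoassoc : Ra ≫ R.map (L.map Ra) = Ra ≫ R.map (L.map η) := by
        rw [hRa, hη, ← R.map_comp, ← R.map_comp, hcoassoc]
      have hnatη : R.map (L.map η) ≫ ζ.app (R.obj (L.obj (R.obj AA)))
          = ζ.app (R.obj AA) ≫ η := by
        have := ζ.naturality η
        simpa using this
      have hnatRa : ζ.app (R.obj AA) ≫ Ra
          = R.map (L.map Ra) ≫ ζ.app (R.obj (L.obj (R.obj AA))) := by
        have := ζ.naturality Ra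
        simpa using this.symm
      -- e equalizes Ra and η
      have heq : e ≫ Ra = e ≫ η := by
        calc e ≫ Ra = Ra ≫ ζ.app (R.obj AA) ≫ Ra := by rw [he_def, Category.assoc]
        _ = Ra ≫ R.map (L.map Ra) ≫ ζ.app (R.obj (L.obj (R.obj AA))) := by rw [hnatRa]
        _ = Ra ≫ R.map (L.map η) ≫ ζ.app (R.obj (L.obj (R.obj AA))) := by
            rw [← Category.assoc, hRcoassoc, Category.assoc]
        _ = Ra ≫ ζ.app (R.obj AA) ≫ η := by rw [hnatη]
        _ = e ≫ η := by rw [he_def, Category.assoc]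
      -- e is idempotent
      have hidemp : e ≫ e = e := by
        calc e ≫ e = (e ≫ Ra) ≫ ζ.app (R.obj AA) := by
              conv_lhs => rw [he_def]
              rw [← Category.assoc]
        _ = (e ≫ η) ≫ ζ.app (R.obj AA) := by rw [heq]
        _ = e ≫ 𝟙 _ := by rw [Category.assoc, hη, hζ']
        _ = e := Category.comp_id e
      obtain ⟨Y, i, p, hip, hpi⟩ := hidem.idempotents_split (R.obj AA) e hidemp
      have hie : i ≫ e = i := by rw [← hpi, ← Category.assoc, hip, Category.id_comp]
      have hiRa : i ≫ Ra = i ≫ η := by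
        conv_lhs => rw [← hie]
        rw [Category.assoc, heq, ← Category.assoc, hie]
      have hεnat : adj.counit.app AA ≫ a
          = L.map Ra ≫ adj.counit.app (L.obj (R.obj AA)) := by
        have := adj.counit.naturality a
        exact this.symm
      have htri : L.map η ≫ adj.counit.app (L.obj (R.obj AA)) = 𝟙 _ := by
        rw [hη]; exact adj.left_triangle_components (R.obj AA)
      have htri' : η ≫ R.map (adj.counit.app AA) = 𝟙 _ := by
        rw [hη]; exact adj.right_triangle_components AA
      have hηnat : adj.unit.app Y ≫ R.map (L.map i) = i ≫ η := by
        have := adj.unit.naturality i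
        simpa [hη] using this.symm
      refine ⟨Y, L.map i ≫ adj.counit.app AA, a ≫ L.map p, ?_, ?_, ?_⟩
      · -- hom ≫ inv = 𝟙 (L Y)
        show (L.map i ≫ adj.counit.app AA) ≫ a ≫ L.map p = 𝟙 (L.obj Y)
        calc (L.map i ≫ adj.counit.app AA) ≫ a ≫ L.map p
            = L.map i ≫ (adj.counit.app AA ≫ a) ≫ L.map p := by simp only [Category.assoc]
        _ = (L.map i ≫ L.map Ra) ≫ adj.counit.app (L.obj (R.obj AA)) ≫ L.map p := by
            rw [hεnat]; simp only [Category.assoc]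
        _ = (L.map i ≫ L.map η) ≫ adj.counit.app (L.obj (R.obj AA)) ≫ L.map p := by
            rw [← L.map_comp, hiRa, L.map_comp]
        _ = L.map i ≫ (L.map η ≫ adj.counit.app (L.obj (R.obj AA))) ≫ L.map p := by
            simp only [Category.assoc]
        _ = L.map i ≫ L.map p := by rw [htri, Category.id_comp]
        _ = 𝟙 (L.obj Y) := by rw [← L.map_comp, hip, L.map_id]
      · -- inv ≫ hom = 𝟙 AA
        show (a ≫ L.map p) ≫ L.map i ≫ adj.counit.app AA = 𝟙 AA
        calc (a ≫ L.map p) ≫ L.map i ≫ adj.counit.app AA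
            = a ≫ L.map (p ≫ i) ≫ adj.counit.app AA := by
              rw [L.map_comp]; simp only [Category.assoc]
        _ = a ≫ (L.map Ra ≫ L.map (ζ.app (R.obj AA))) ≫ adj.counit.app AA := by
            rw [hpi, he_def, L.map_comp]
        _ = ((a ≫ L.map Ra) ≫ L.map (ζ.app (R.obj AA))) ≫ adj.counit.app AA := by
            simp only [Category.assoc]
        _ = ((a ≫ L.map η) ≫ L.map (ζ.app (R.obj AA))) ≫ adj.counit.app AA := by
            rw [hcoassoc]
        _ = a ≫ L.map (η ≫ ζ.app (R.obj AA)) ≫ adj.counit.app AA := by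
            rw [L.map_comp]; simp only [Category.assoc]
        _ = a ≫ adj.counit.app AA := by
            rw [hη, hζ', L.map_id]; simp
        _ = 𝟙 AA := hAcounit
      · -- compatibility with coalgebra structures
        show L.map (adj.unit.app Y) ≫ L.map (R.map (L.map i ≫ adj.counit.app AA))
            = (L.map i ≫ adj.counit.app AA) ≫ a
        calc L.map (adj.unit.app Y) ≫ L.map (R.map (L.map i ≫ adj.counit.app AA))
            = L.map (adj.unit.app Y ≫ R.map (L.map i)) ≫ L.map (R.map (adj.counit.app AA)) := by
              simp only [Functor.map_comp, Category.assoc]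
        _ = L.map i ≫ L.map (η ≫ R.map (adj.counit.app AA)) := by
            rw [hηnat, L.map_comp, L.map_comp]; simp only [Category.assoc]
        _ = L.map i := by rw [htri', L.map_id, Category.comp_id]
        _ = (L.map i ≫ adj.counit.app AA) ≫ a := by
            symm
            calc (L.map i ≫ adj.counit.app AA) ≫ a
                = L.map i ≫ adj.counit.app AA ≫ a := by simp only [Category.assoc]
            _ = (L.map i ≫ L.map Ra) ≫ adj.counit.app (L.obj (R.obj AA)) := by
                rw [hεnat]; simp only [Category.assoc]
            _ = L.map i ≫ L.map η ≫ adj.counit.app (L.obj (R.obj AA)) := by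
                rw [← L.map_comp, hiRa, L.map_comp]; simp only [Category.assoc]
            _ = L.map i := by rw [htri, Category.comp_id]
    constructor
    intro A
    have hcoassoc : A.a ≫ L.map (R.map A.a) = A.a ≫ L.map (adj.unit.app (R.obj A.A)) := by
      have := A.coassoc
      simp only [Adjunction.toComonad_coe, Adjunction.toComonad_δ, Functor.comp_map,
        Functor.whiskerRight_app, Functor.whiskerLeft_app] at this
      exact this.symm
    have hAcounit : A.a ≫ adj.counit.app A.A = 𝟙 A.A := by
      have := A.counit
      simpa using this
    obtain ⟨Y, hom, inv, h1, h2, h3⟩ := key A.A A.a hcoassoc hAcounit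
    exact ⟨Y, ⟨Comonad.Coalgebra.isoMk ⟨hom, inv, h1, h2⟩ h3⟩⟩
  constructor <;> infer_instance
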